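/- Let X be a metric space and S a set of cardinality bigger than card(X × ℕ). Suppose that for each ε > 0 there is an (ε,ε)-Lipschitz partition of unity f : X → Δ(S) such that the family {f⁻¹(st(v))}_{v∈S} is uniformly bounded. Then there exist functions α : (0,∞) → (0,∞) and M : (0,∞) × (0,∞) → (0,∞) such that LsExtDim(X, α, M) ≤ ∞, i.e., for any K > 0, any ε > 0, and any subset A of X, every (α(ε),α(ε))-Lipschitz and K-cobounded partition of unity f : A → Δ(S) extends to an (ε,ε)-Lipschitz, M(ε,K)-cobounded partition of unity g : X → Δ(S). -/

import Mathlib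

universe u

/-- The `l¹` distance between two (finitely supported) functions `S → ℝ`,
modeling the metric of `Δ(S) ⊆ l¹(S)`. -/
noncomputable def l1dist {S : Type*} (φ ψ : S → ℝ) : ℝ := ∑ᶠ v, |φ v - ψ v|

/-- `φ` is a point of `Δ(S)`. -/
def IsDelta {S : Type*} (φ : S → ℝ) : Prop :=
  (∀ v, 0 ≤ φ v) ∧ (Function.support φ).Finite ∧ ∑ᶠ v, φ v = 1

/-- `f` is a partition of unity on `A` with values in `Δ(S)`. -/
def PartUnityOn {X S : Type*} (f : X → S → ℝ) (A : Set X) : Prop :=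
  ∀ a ∈ A, IsDelta (f a)

/-- `f` is `(ε,ε)`-Lipschitz on `A` (with respect to the `l¹` metric on `Δ(S)`). -/
def LipschitzEpsOn {X S : Type*} [MetricSpace X] (ε : ℝ) (f : X → S → ℝ) (A : Set X) : Prop :=
  ∀ x ∈ A, ∀ y ∈ A, l1dist (f x) (f y) ≤ ε * dist x y + ε

/-- `f` is `K`-cobounded on `A`: for every vertex `v`, the preimage of the star of `v`
has diameter at most `K`. -/
def CoboundedOn {X S : Type*} [MetricSpace X] (K : ℝ) (f : X → S → ℝ) (A : Set X) : Prop :=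
  ∀ v : S, EMetric.diam {x ∈ A | 0 < f x v} ≤ ENNReal.ofReal K

open Function

lemma l1dist_eq_sum {S : Type*} {φ ψ : S → ℝ} {t : Finset S}
    (hφ : support φ ⊆ ↑t) (hψ : support ψ ⊆ ↑t) :
    l1dist φ ψ = ∑ u ∈ t, |φ u - ψ u| := by
  unfold l1dist
  apply finsum_eq_finset_sum_of_support_subset
  intro u hu
  rw [mem_support] at hu
  by_contra hut
  have h1 : φ u = 0 := by
    by_contra hh; exact hut (hφ (mem_support.mpr hh))
  have h2 : ψ u = 0 := by
    by_contra hh; exact hut (hψ (mem_support.mpr hh))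
  simp [h1, h2] at hu

lemma l1dist_comm {S : Type*} (φ ψ : S → ℝ) : l1dist φ ψ = l1dist ψ φ := by
  unfold l1dist
  exact finsum_congr fun v => abs_sub_comm _ _

lemma l1dist_triangle {S : Type*} {φ ψ ρ : S → ℝ}
    (hφ : (support φ).Finite) (hψ : (support ψ).Finite) (hρ : (support ρ).Finite) :
    l1dist φ ρ ≤ l1dist φ ψ + l1dist ψ ρ := by
  classical
  set t : Finset S := (hφ.toFinset ∪ hψ.toFinset) ∪ hρ.toFinset with ht
  have hφt : support φ ⊆ ↑t := by
    intro u hu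
    simp only [ht, Finset.coe_union, Set.mem_union, Set.Finite.coe_toFinset]
    tauto
  have hψt : support ψ ⊆ ↑t := by
    intro u hu
    simp only [ht, Finset.coe_union, Set.mem_union, Set.Finite.coe_toFinset]
    tauto
  have hρt : support ρ ⊆ ↑t := by
    intro u hu
    simp only [ht, Finset.coe_union, Set.mem_union, Set.Finite.coe_toFinset]
    tauto
  rw [l1dist_eq_sum hφt hρt, l1dist_eq_sum hφt hψt, l1dist_eq_sum hψt hρt,
    ← Finset.sum_add_distrib]
  exact Finset.sum_le_sum fun u _ => abs_sub_le _ _ _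

lemma IsDelta.sum_eq {S : Type*} {φ : S → ℝ} (hφ : IsDelta φ) {t : Finset S}
    (h : support φ ⊆ ↑t) : ∑ u ∈ t, φ u = 1 := by
  rw [← finsum_eq_finset_sum_of_support_subset _ h]; exact hφ.2.2

lemma isDelta_single {S : Type*} [DecidableEq S] (v : S) : IsDelta (fun u => if u = v then (1:ℝ) else 0) := by
  classical
  refine ⟨fun u => by dsimp only; split <;> norm_num, ?_, ?_⟩
  · apply Set.Finite.subset (Set.finite_singleton v)
    intro u hu
    rw [mem_support] at hu
    by_contra hh
    simp only [Set.mem_singleton_iff] at hh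
    exact hu (if_neg hh)
  · rw [finsum_eq_single _ v (fun u hu => if_neg hu)]
    simp

noncomputable def mixFn {S : Type*} (φ : S → ℝ) (q : S → S → ℝ) : S → ℝ :=
  fun u => ∑ᶠ v, φ v * q v u

lemma mixFn_eq_sum {S : Type*} (φ : S → ℝ) (q : S → S → ℝ) {s : Finset S}
    (hs : support φ ⊆ ↑s) (u : S) :
    mixFn φ q u = ∑ v ∈ s, φ v * q v u := by
  apply finsum_eq_finset_sum_of_support_subset
  intro v hv
  rw [mem_support] at hv
  apply hs
  rw [mem_support]
  exact fun hh => hv (by simp [hh])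

lemma mixFn_support {S : Type*} [DecidableEq S] {φ : S → ℝ} {q : S → S → ℝ}
    {s : Finset S} (hs : support φ ⊆ ↑s) (hq : ∀ v, IsDelta (q v)) :
    support (mixFn φ q) ⊆ ↑(s.biUnion fun v => (hq v).2.1.toFinset) := by
  classical
  intro u hu
  rw [mem_support] at hu
  rw [mixFn_eq_sum φ q hs u] at hu
  by_contra hut
  apply hu
  apply Finset.sum_eq_zero
  intro v hv
  have hqu : q v u = 0 := by
    by_contra h0
    exact hut (Finset.mem_coe.mpr (Finset.mem_biUnion.mpr
      ⟨v, hv, (hq v).2.1.mem_toFinset.mpr (mem_support.mpr h0)⟩))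
  simp [hqu]

lemma mixFn_isDelta {S : Type*} {φ : S → ℝ} {q : S → S → ℝ}
    (hφ : IsDelta φ) (hq : ∀ v, IsDelta (q v)) :
    IsDelta (mixFn φ q) := by
  classical
  set s : Finset S := hφ.2.1.toFinset with hsdef
  have hs : support φ ⊆ ↑s := by simp [hsdef, Set.Finite.coe_toFinset]
  set T : Finset S := s.biUnion fun v => (hq v).2.1.toFinset with hTdef
  have hqT : ∀ v ∈ s, support (q v) ⊆ ↑T := by
    intro v hv u hu
    exact Finset.mem_coe.mpr (Finset.mem_biUnion.mpr ⟨v, hv, (hq v).2.1.mem_toFinset.mpr hu⟩)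
  refine ⟨?_, ?_, ?_⟩
  · intro u
    rw [mixFn_eq_sum φ q hs u]
    exact Finset.sum_nonneg fun v _ => mul_nonneg (hφ.1 v) ((hq v).1 u)
  · exact Set.Finite.subset T.finite_toSet (mixFn_support hs hq)
  · rw [finsum_eq_finset_sum_of_support_subset _ (mixFn_support hs hq)]
    calc ∑ u ∈ T, mixFn φ q u = ∑ u ∈ T, ∑ v ∈ s, φ v * q v u :=
          Finset.sum_congr rfl fun u _ => mixFn_eq_sum φ q hs u
      _ = ∑ v ∈ s, ∑ u ∈ T, φ v * q v u := Finset.sum_comm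
      _ = ∑ v ∈ s, φ v := by
          refine Finset.sum_congr rfl fun v hv => ?_
          rw [← Finset.mul_sum, (hq v).sum_eq (hqT v hv), mul_one]
      _ = 1 := hφ.sum_eq hs

lemma mixFn_l1dist_le {S : Type*} {φ ψ : S → ℝ} {q : S → S → ℝ}
    (hφ : IsDelta φ) (hψ : IsDelta ψ) (hq : ∀ v, IsDelta (q v)) :
    l1dist (mixFn φ q) (mixFn ψ q) ≤ l1dist φ ψ := by
  classical
  set s : Finset S := hφ.2.1.toFinset ∪ hψ.2.1.toFinset with hsdef
  have hφs : support φ ⊆ ↑s := by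
    intro v hv
    simp only [hsdef, Finset.coe_union, Set.mem_union, Set.Finite.coe_toFinset]
    exact Or.inl hv
  have hψs : support ψ ⊆ ↑s := by
    intro v hv
    simp only [hsdef, Finset.coe_union, Set.mem_union, Set.Finite.coe_toFinset]
    exact Or.inr hv
  set T : Finset S := s.biUnion fun v => (hq v).2.1.toFinset with hTdef
  have hqT : ∀ v ∈ s, support (q v) ⊆ ↑T := by
    intro v hv u hu
    exact Finset.mem_coe.mpr (Finset.mem_biUnion.mpr ⟨v, hv, (hq v).2.1.mem_toFinset.mpr hu⟩)
  rw [l1dist_eq_sum (mixFn_support hφs hq) (mixFn_support hψs hq), l1dist_eq_sum hφs hψs]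
  have step1 : ∀ u ∈ T, |mixFn φ q u - mixFn ψ q u| ≤ ∑ v ∈ s, |φ v - ψ v| * q v u := by
    intro u _
    rw [mixFn_eq_sum φ q hφs u, mixFn_eq_sum ψ q hψs u, ← Finset.sum_sub_distrib]
    refine (Finset.abs_sum_le_sum_abs _ _).trans (Finset.sum_le_sum fun v _ => ?_)
    rw [← sub_mul, abs_mul, abs_of_nonneg ((hq v).1 u)]
  refine (Finset.sum_le_sum step1).trans ?_
  rw [Finset.sum_comm]
  refine le_of_eq (Finset.sum_congr rfl fun v hv => ?_)
  rw [← Finset.mul_sum, (hq v).sum_eq (hqT v hv), mul_one]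

lemma mixFn_close {S : Type*} {φ ρ : S → ℝ} {q : S → S → ℝ} {c : ℝ}
    (hφ : IsDelta φ) (hρ : IsDelta ρ) (hq : ∀ v, IsDelta (q v))
    (hc : ∀ v, φ v ≠ 0 → l1dist (q v) ρ ≤ c) :
    l1dist (mixFn φ q) ρ ≤ c := by
  classical
  set s : Finset S := hφ.2.1.toFinset with hsdef
  have hφs : support φ ⊆ ↑s := by simp [hsdef, Set.Finite.coe_toFinset]
  set T : Finset S := (s.biUnion fun v => (hq v).2.1.toFinset) ∪ hρ.2.1.toFinset with hTdef
  have hqT : ∀ v ∈ s, support (q v) ⊆ ↑T := by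
    intro v hv u hu
    simp only [hTdef, Finset.coe_union, Set.mem_union]
    exact Or.inl (Finset.mem_coe.mpr (Finset.mem_biUnion.mpr
      ⟨v, hv, (hq v).2.1.mem_toFinset.mpr hu⟩))
  have hρT : support ρ ⊆ ↑T := by
    intro u hu
    simp only [hTdef, Finset.coe_union, Set.mem_union, Set.Finite.coe_toFinset]
    exact Or.inr hu
  have hmixT : support (mixFn φ q) ⊆ ↑T := by
    refine (mixFn_support hφs hq).trans ?_
    intro u hu
    simp only [hTdef, Finset.coe_union, Set.mem_union]
    exact Or.inl hu
  have hsum1 : ∑ v ∈ s, φ v = 1 := hφ.sum_eq hφs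
  rw [l1dist_eq_sum hmixT hρT]
  have key : ∀ u ∈ T, |mixFn φ q u - ρ u| ≤ ∑ v ∈ s, φ v * |q v u - ρ u| := by
    intro u _
    have heq : mixFn φ q u - ρ u = ∑ v ∈ s, φ v * (q v u - ρ u) := by
      simp only [mul_sub]
      rw [Finset.sum_sub_distrib, ← Finset.sum_mul, hsum1, one_mul,
        ← mixFn_eq_sum φ q hφs u]
    rw [heq]
    refine (Finset.abs_sum_le_sum_abs _ _).trans (Finset.sum_le_sum fun v _ => ?_)
    rw [abs_mul, abs_of_nonneg (hφ.1 v)]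
  refine (Finset.sum_le_sum key).trans ?_
  rw [Finset.sum_comm]
  have heq2 : ∀ v ∈ s, ∑ u ∈ T, φ v * |q v u - ρ u| = φ v * l1dist (q v) ρ := by
    intro v hv
    rw [← Finset.mul_sum, ← l1dist_eq_sum (hqT v hv) hρT]
  rw [Finset.sum_congr rfl heq2]
  calc ∑ v ∈ s, φ v * l1dist (q v) ρ ≤ ∑ v ∈ s, φ v * c := by
        refine Finset.sum_le_sum fun v hv => ?_
        have hv0 : φ v ≠ 0 := mem_support.mp (hφ.2.1.mem_toFinset.mp hv)
        exact mul_le_mul_of_nonneg_left (hc v hv0) (hφ.1 v)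
    _ = c := by rw [← Finset.sum_mul, hsum1, one_mul]

lemma mixFn_pos {S : Type*} {φ : S → ℝ} {q : S → S → ℝ} {u : S}
    (hφ : IsDelta φ) (hq : ∀ v, IsDelta (q v)) (h : 0 < mixFn φ q u) :
    ∃ v, 0 < φ v ∧ 0 < q v u := by
  classical
  have hφs : support φ ⊆ ↑hφ.2.1.toFinset := by simp [Set.Finite.coe_toFinset]
  rw [mixFn_eq_sum φ q hφs u] at h
  by_contra hcon
  push_neg at hcon
  have hz : ∀ v ∈ hφ.2.1.toFinset, φ v * q v u = 0 := by
    intro v _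
    rcases eq_or_lt_of_le (hφ.1 v) with h0 | h0
    · rw [← h0, zero_mul]
    · have h1 := hcon v h0
      have h2 := (hq v).1 u
      rw [le_antisymm h1 h2, mul_zero]
  rw [Finset.sum_eq_zero hz] at h
  exact lt_irrefl 0 h

lemma dist_le_of_diam_le {X : Type*} [MetricSpace X] {s : Set X} {M : ℝ} (hM : 0 ≤ M)
    (h : EMetric.diam s ≤ ENNReal.ofReal M) {x y : X} (hx : x ∈ s) (hy : y ∈ s) :
    dist x y ≤ M := by
  have h1 := (EMetric.edist_le_diam_of_mem hx hy).trans h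
  rw [edist_dist] at h1
  exact (ENNReal.ofReal_le_ofReal_iff hM).mp h1

/-- Theorem 6.4, (1) ⇒ (2) for `n = ∞`. If for each `ε > 0` there is an
`(ε,ε)`-Lipschitz partition of unity `f : X → Δ(S)` with `{f⁻¹(st v)}` uniformly bounded,
then there are `α, M` such that every `(α ε, α ε)`-Lipschitz `K`-cobounded partition of
unity on a subset `A ⊆ X` extends to an `(ε,ε)`-Lipschitz `M ε K`-cobounded partition of
unity on `X`. -/
theorem stmt9 {X : Type u} [MetricSpace X] (S : Type u)
    (hS : Cardinal.mk (X × ℕ) < Cardinal.mk S)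
    (h : ∀ ε > (0:ℝ), ∃ f : X → S → ℝ, PartUnityOn f Set.univ ∧
      LipschitzEpsOn ε f Set.univ ∧ ∃ M' : ℝ, 0 < M' ∧ CoboundedOn M' f Set.univ) :
    ∃ α : ℝ → ℝ, ∃ M : ℝ → ℝ → ℝ, (∀ ε > (0:ℝ), 0 < α ε) ∧
      (∀ ε > (0:ℝ), ∀ K > (0:ℝ), 0 < M ε K) ∧
      ∀ K > (0:ℝ), ∀ ε > (0:ℝ), ∀ (A : Set X) (f : X → S → ℝ),
        PartUnityOn f A → LipschitzEpsOn (α ε) f A → CoboundedOn K f A →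
        ∃ g : X → S → ℝ, (∀ a ∈ A, g a = f a) ∧ PartUnityOn g Set.univ ∧
          LipschitzEpsOn ε g Set.univ ∧ CoboundedOn (M ε K) g Set.univ := by
  classical
  choose F hFPU hFLip M' hM'pos hM'cob using h
  rcases isEmpty_or_nonempty X with hXe | hX
  · refine ⟨fun _ => 1, fun _ _ => 1, fun _ _ => one_pos, fun _ _ _ _ => one_pos, ?_⟩
    intro K _ ε _ A f _ _ _
    refine ⟨f, fun a _ => rfl, fun x _ => isEmptyElim x, fun x _ => isEmptyElim x, ?_⟩
    intro v
    have he : {x : X | x ∈ Set.univ ∧ 0 < f x v} = ∅ := Set.eq_empty_of_isEmpty _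
    rw [he]
    exact (Metric.ediam_empty : Metric.ediam (∅ : Set X) = 0).trans_le zero_le
  -- define the total bound function
  · let Mf : ℝ → ℝ := fun ε => if hε : 0 < ε then M' (ε/2) (half_pos hε) else 1
    have hMf : ∀ (ε : ℝ) (hε : 0 < ε), Mf ε = M' (ε/2) (half_pos hε) := fun ε hε => dif_pos hε
    have hMfpos : ∀ ε : ℝ, 0 < Mf ε := by
      intro ε
      by_cases hε : 0 < ε
      · rw [hMf ε hε]; exact hM'pos _ _
      · have : Mf ε = 1 := dif_neg hε
        rw [this]; norm_num
    refine ⟨fun ε => ε / (2 * (Mf ε + 1)), fun ε K => 2 * Mf ε + 2 * K + 1, ?_, ?_, ?_⟩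
    · intro ε hε
      have := hMfpos ε
      show 0 < ε / (2 * (Mf ε + 1))
      positivity
    · intro ε _ K hK
      have := hMfpos ε
      show 0 < 2 * Mf ε + 2 * K + 1
      linarith
    intro K hK ε hε A f hfPU hfLip hfCob
    -- basic data at scale ε/2
    let hfn : X → S → ℝ := F (ε/2) (half_pos hε)
    have hHPU : PartUnityOn hfn Set.univ := hFPU (ε/2) (half_pos hε)
    have hHLip : LipschitzEpsOn (ε/2) hfn Set.univ := hFLip (ε/2) (half_pos hε)
    have hHcob : CoboundedOn (Mf ε) hfn Set.univ := by
      rw [hMf ε hε]; exact hM'cob (ε/2) (half_pos hε)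
    have hδMpos : 0 < Mf ε := hMfpos ε
    have hHx : ∀ x : X, IsDelta (hfn x) := fun x => hHPU x (Set.mem_univ x)
    -- the α value
    have hfLip' : ∀ x ∈ A, ∀ y ∈ A,
        l1dist (f x) (f y) ≤ (ε / (2 * (Mf ε + 1))) * dist x y + ε / (2 * (Mf ε + 1)) := hfLip
    have hαpos : 0 < ε / (2 * (Mf ε + 1)) := by positivity
    have hαle : ε / (2 * (Mf ε + 1)) ≤ ε := by
      apply div_le_self hε.le
      linarith
    -- fresh vertices
    set U : Set S := ⋃ a ∈ A, Function.support (f a) with hUdef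
    have hsup : ⨆ x : ↥A, Cardinal.mk ↥(Function.support (f ↑x)) ≤ Cardinal.aleph0 := by
      refine ciSup_le' fun x => ?_
      haveI := ((hfPU x.1 x.2).2.1).to_subtype
      exact (Cardinal.lt_aleph0_of_finite _).le
    have hUcard : Cardinal.mk ↥U < Cardinal.mk S := by
      have h1 := Cardinal.mk_biUnion_le (fun a => Function.support (f a)) A
      have h2 : Cardinal.mk ↥A * (⨆ x : ↥A, Cardinal.mk ↥(Function.support (f ↑x))) ≤
          Cardinal.mk X * Cardinal.aleph0 :=
        mul_le_mul' (Cardinal.mk_set_le A) hsup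
      have h3 : Cardinal.mk X * Cardinal.aleph0 = Cardinal.mk (X × ℕ) := by
        rw [Cardinal.mk_prod]
        simp
      exact lt_of_le_of_lt (le_trans (h1.trans h2) h3.le) hS
    have hSinf : Cardinal.aleph0 ≤ Cardinal.mk S := by
      refine le_of_lt (lt_of_le_of_lt ?_ hS)
      obtain ⟨x0⟩ := hX
      have hinj : Function.Injective (fun n : ULift.{u} ℕ => ((x0, n.down) : X × ℕ)) := by
        intro a b hab
        simp only [Prod.mk.injEq] at hab
        exact ULift.ext a b hab.2
      have := Cardinal.mk_le_of_injective hinj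
      simpa using this
    have hcompl : Cardinal.mk S ≤ Cardinal.mk ↥Uᶜ := by
      by_contra hcon
      push_neg at hcon
      have hlt := Cardinal.add_lt_of_lt hSinf hUcard hcon
      rw [Cardinal.mk_sum_compl] at hlt
      exact lt_irrefl _ hlt
    obtain ⟨w⟩ := (Cardinal.le_def _ _).mp hcompl
    let wv : S → S := fun v => ((w v : ↥Uᶜ) : S)
    have hwinj : Function.Injective wv := fun a b hab => w.injective (Subtype.ext hab)
    have hwfresh : ∀ v, wv v ∉ U := fun v => (w v).2
    -- the vertex substitution
    let q : S → S → ℝ := fun v =>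
      if hv : ∃ a ∈ A, 0 < hfn a v then f hv.choose
      else fun u => if u = wv v then 1 else 0
    have hq_pos : ∀ (v : S) (hv : ∃ a ∈ A, 0 < hfn a v), q v = f hv.choose :=
      fun v hv => dif_pos hv
    have hq_neg : ∀ (v : S), ¬ (∃ a ∈ A, 0 < hfn a v) →
        q v = fun u => if u = wv v then 1 else 0 :=
      fun v hv => dif_neg hv
    have hqD : ∀ v, IsDelta (q v) := by
      intro v
      by_cases hv : ∃ a ∈ A, 0 < hfn a v
      · rw [hq_pos v hv]
        exact hfPU _ hv.choose_spec.1
      · rw [hq_neg v hv]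
        exact isDelta_single _
    -- the extension
    let g0 : X → S → ℝ := fun x => mixFn (hfn x) q
    let g : X → S → ℝ := fun x => if x ∈ A then f x else g0 x
    have hgA : ∀ a ∈ A, g a = f a := fun a ha => if_pos ha
    have hgN : ∀ x, x ∉ A → g x = g0 x := fun x hx => if_neg hx
    have hg0D : ∀ x, IsDelta (g0 x) := fun x => mixFn_isDelta (hHx x) hqD
    -- distance within stars of hfn
    have hdistM : ∀ (v : S) (x y : X), 0 < hfn x v → 0 < hfn y v → dist x y ≤ Mf ε := by
      intro v x y hx hy
      exact dist_le_of_diam_le hδMpos.le (hHcob v)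
        (Set.mem_sep (Set.mem_univ x) hx) (Set.mem_sep (Set.mem_univ y) hy)
    -- closeness on A
    have hclose : ∀ a ∈ A, l1dist (g0 a) (f a) ≤ ε/2 := by
      intro a ha
      refine mixFn_close (hHx a) (hfPU a ha) hqD ?_
      intro v hv0
      have hvpos : 0 < hfn a v := lt_of_le_of_ne ((hHx a).1 v) (Ne.symm hv0)
      have hv : ∃ b ∈ A, 0 < hfn b v := ⟨a, ha, hvpos⟩
      rw [hq_pos v hv]
      obtain ⟨hbA, hbv⟩ := hv.choose_spec
      have hd : dist hv.choose a ≤ Mf ε := hdistM v _ _ hbv hvpos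
      have hLb := hfLip' hv.choose hbA a ha
      have hbound : (ε / (2 * (Mf ε + 1))) * dist hv.choose a + ε / (2 * (Mf ε + 1)) ≤
          (ε / (2 * (Mf ε + 1))) * Mf ε + ε / (2 * (Mf ε + 1)) := by
        nlinarith
      have hval : (ε / (2 * (Mf ε + 1))) * Mf ε + ε / (2 * (Mf ε + 1)) = ε / 2 := by
        have hne : (2:ℝ) * (Mf ε + 1) ≠ 0 := by positivity
        field_simp
      linarith
    -- Lipschitz of g0
    have hg0Lip : ∀ x y : X, l1dist (g0 x) (g0 y) ≤ (ε/2) * dist x y + ε/2 :=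
      fun x y => le_trans (mixFn_l1dist_le (hHx x) (hHx y) hqD)
        (hHLip x (Set.mem_univ x) y (Set.mem_univ y))
    refine ⟨g, hgA, ?_, ?_, ?_⟩
    · intro x _
      by_cases hx : x ∈ A
      · rw [hgA x hx]; exact hfPU x hx
      · rw [hgN x hx]; exact hg0D x
    · -- Lipschitz of g
      intro x _ y _
      have hd0 : (0:ℝ) ≤ dist x y := dist_nonneg
      by_cases hx : x ∈ A <;> by_cases hy : y ∈ A
      · rw [hgA x hx, hgA y hy]
        have h1 := hfLip' x hx y hy
        have h2 : (ε / (2 * (Mf ε + 1))) * dist x y ≤ ε * dist x y :=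
          mul_le_mul_of_nonneg_right hαle hd0
        linarith
      · rw [hgA x hx, hgN y hy]
        have t0 := l1dist_triangle (hfPU x hx).2.1 (hg0D x).2.1 (hg0D y).2.1
        have t1 : l1dist (f x) (g0 x) ≤ ε/2 := by
          rw [l1dist_comm]; exact hclose x hx
        have t2 := hg0Lip x y
        have h2 : (ε/2) * dist x y ≤ ε * dist x y := by nlinarith
        linarith
      · rw [hgN x hx, hgA y hy, l1dist_comm]
        have t0 := l1dist_triangle (hfPU y hy).2.1 (hg0D y).2.1 (hg0D x).2.1
        have t1 : l1dist (f y) (g0 y) ≤ ε/2 := by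
          rw [l1dist_comm]; exact hclose y hy
        have t2 := hg0Lip y x
        rw [dist_comm y x] at t2
        have h2 : (ε/2) * dist x y ≤ ε * dist x y := by nlinarith
        linarith
      · rw [hgN x hx, hgN y hy]
        have t2 := hg0Lip x y
        have h2 : (ε/2) * dist x y ≤ ε * dist x y := by nlinarith
        linarith
    · -- coboundedness of g
      intro u
      refine EMetric.diam_le ?_
      rintro x ⟨-, hxu⟩ y ⟨-, hyu⟩
      rw [edist_dist]
      refine ENNReal.ofReal_le_ofReal ?_
      show dist x y ≤ 2 * Mf ε + 2 * K + 1
      have key : ∀ z : X, 0 < g z u →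
          (∃ b, b ∈ A ∧ 0 < f b u ∧ dist z b ≤ Mf ε) ∨ (∃ v, u = wv v ∧ 0 < hfn z v) := by
        intro z hz
        by_cases hzA : z ∈ A
        · left
          rw [hgA z hzA] at hz
          exact ⟨z, hzA, hz, by simp [hδMpos.le]⟩
        · rw [hgN z hzA] at hz
          obtain ⟨v, hv1, hv2⟩ := mixFn_pos (hHx z) hqD hz
          by_cases hv : ∃ a ∈ A, 0 < hfn a v
          · left
            rw [hq_pos v hv] at hv2
            obtain ⟨hbA, hbv⟩ := hv.choose_spec
            exact ⟨hv.choose, hbA, hv2, hdistM v z _ hv1 hbv⟩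
          · right
            rw [hq_neg v hv] at hv2
            refine ⟨v, ?_, hv1⟩
            by_contra hne
            simp [hne] at hv2
      have freshU : ∀ (b : X) (v : S), b ∈ A → 0 < f b u → u = wv v → False := by
        intro b v hbA hbu huv
        apply hwfresh v
        rw [← huv, hUdef]
        exact Set.mem_biUnion hbA (Function.mem_support.mpr (ne_of_gt hbu))
      rcases key x hxu with ⟨bx, hbxA, hbxu, hdx⟩ | ⟨vx, hux, hvx⟩ <;>
        rcases key y hyu with ⟨by', hbyA, hbyu, hdy⟩ | ⟨vy, huy, hvy⟩
      · have hbb : dist bx by' ≤ K :=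
          dist_le_of_diam_le hK.le (hfCob u) ⟨hbxA, hbxu⟩ ⟨hbyA, hbyu⟩
        have htr := dist_triangle4 x bx by' y
        have hdy' : dist by' y ≤ Mf ε := by rw [dist_comm]; exact hdy
        linarith
      · exact absurd (freshU bx vy hbxA hbxu huy) (fun hh => hh)
      · exact absurd (freshU by' vx hbyA hbyu hux) (fun hh => hh)
      · have hvv : vx = vy := hwinj (hux ▸ huy)
        have := hdistM vx x y hvx (hvv ▸ hvy)
        linarith
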